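/- Let L be an n×n real symmetric positive semidefinite matrix and K = L(L+I)⁻¹ its marginal kernel. For every subset A ⊆ {1,…,n}, the sum of det(L_Y) over all subsets Y ⊆ {1,…,n} containing A equals det(K_A) · det(L+I); equivalently, under the L-ensemble distribution P_L(Y) = det(L_Y)/det(L+I), the inclusion probability of A satisfies P(A ⊆ Y) = det(K_A). -/

import Mathlib

open Matrix BigOperators

/-- The principal submatrix of `M` indexed by the subset `S`. -/
def principalSubmatrix {n : ℕ} (M : Matrix (Fin n) (Fin n) ℝ) (S : Finset (Fin n)) :
    Matrix {i // i ∈ S} {i // i ∈ S} ℝ :=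
  M.submatrix (fun i => (i : Fin n)) (fun i => (i : Fin n))

/-- If rows outside `S` are the corresponding identity rows, the determinant is the
principal minor on `S`. -/
lemma det_eq_det_principal_of_rows {n : ℕ} (N : Matrix (Fin n) (Fin n) ℝ)
    (S : Finset (Fin n)) (h1 : ∀ i ∉ S, ∀ j, N i j = (1 : Matrix (Fin n) (Fin n) ℝ) i j) :
    N.det = (principalSubmatrix N S).det := by
  rw [Matrix.twoBlockTriangular_det N (fun i => i ∈ S)
    (fun i hi j hj => by
      rw [h1 i hi j]
      exact Matrix.one_apply_ne (by rintro rfl; exact hi hj))]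
  have h2 : (Matrix.toSquareBlockProp N fun i => ¬ i ∈ S) = 1 := by
    ext i j
    simp only [Matrix.toSquareBlockProp_def, Matrix.of_apply]
    rw [h1 i.1 i.2 j.1]
    by_cases h : i = j
    · subst h; rw [Matrix.one_apply_eq, Matrix.one_apply_eq]
    · rw [Matrix.one_apply_ne (fun hh => h (Subtype.ext hh)), Matrix.one_apply_ne h]
  have h3 : (Matrix.toSquareBlockProp N fun i => i ∈ S) = principalSubmatrix N S := rfl
  rw [h2, h3, Matrix.det_one, mul_one]
  congr!

/-- If columns outside `S` are the corresponding identity columns, the determinant is the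
principal minor on `S`. -/
lemma det_eq_det_principal_of_cols {n : ℕ} (N : Matrix (Fin n) (Fin n) ℝ)
    (S : Finset (Fin n)) (h1 : ∀ j ∉ S, ∀ i, N i j = (1 : Matrix (Fin n) (Fin n) ℝ) i j) :
    N.det = (principalSubmatrix N S).det := by
  rw [← Matrix.det_transpose N, det_eq_det_principal_of_rows Nᵀ S
    (fun i hi j => by
      rw [Matrix.transpose_apply, h1 i hi j]
      simp [Matrix.one_apply, eq_comm])]
  have : principalSubmatrix Nᵀ S = (principalSubmatrix N S)ᵀ := rfl
  rw [this, Matrix.det_transpose]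

/-- Sum of principal minors over supersets of `A` equals a determinant of `L` plus a
partial identity. -/
lemma sum_principal_minors {n : ℕ} (L : Matrix (Fin n) (Fin n) ℝ) (A : Finset (Fin n)) :
    ∑ Y ∈ Finset.univ.filter (fun Y : Finset (Fin n) => A ⊆ Y),
        (principalSubmatrix L Y).det
      = (L + Matrix.diagonal (fun i => if i ∈ A then (0:ℝ) else 1)).det := by
  set d : Fin n → ℝ := fun i => if i ∈ A then (0:ℝ) else 1 with hd
  have expand : (L + Matrix.diagonal d).det
      = ∑ s : Finset (Fin n), Matrix.det (Matrix.of (s.piecewise L (Matrix.diagonal d))) := by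
    have := (Matrix.detRowAlternating (R := ℝ) (n := Fin n)).toMultilinearMap.map_add_univ
      (L : Fin n → Fin n → ℝ) (Matrix.diagonal d : Fin n → Fin n → ℝ)
    exact this
  rw [expand]
  rw [Finset.sum_filter]
  apply Finset.sum_congr rfl
  intro s _
  by_cases hAs : A ⊆ s
  · rw [if_pos hAs]
    have h := det_eq_det_principal_of_rows (Matrix.of (s.piecewise L (Matrix.diagonal d))) s
      (fun i hi j => by
        simp only [Matrix.of_apply, Finset.piecewise, if_neg hi]
        have hiA : i ∉ A := fun h => hi (hAs h)
        by_cases h : i = j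
        · subst h; simp [Matrix.diagonal_apply_eq, hd, hiA, Matrix.one_apply_eq]
        · rw [Matrix.diagonal_apply_ne _ h, Matrix.one_apply_ne h])
    rw [h]
    congr 1
    ext i j
    simp [principalSubmatrix, Finset.piecewise, i.2]
  · rw [if_neg hAs]
    obtain ⟨i, hiA, his⟩ := Finset.not_subset.mp hAs
    symm
    apply Matrix.det_eq_zero_of_row_eq_zero i
    intro j
    simp only [Matrix.of_apply, Finset.piecewise, if_neg his]
    by_cases h : i = j
    · subst h; simp [hd, hiA]
    · rw [Matrix.diagonal_apply_ne _ h]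

theorem inclusion_probability_eq_det_marginal {n : ℕ} (L : Matrix (Fin n) (Fin n) ℝ)
    (hL : L.PosSemidef) (A : Finset (Fin n)) :
    ∑ Y ∈ Finset.univ.filter (fun Y : Finset (Fin n) => A ⊆ Y),
        (principalSubmatrix L Y).det
      = (principalSubmatrix (L * (L + 1)⁻¹) A).det * (L + 1).det := by
  have hpd : (L + 1).PosDef := Matrix.PosDef.posSemidef_add hL Matrix.PosDef.one
  have hunit : IsUnit (L + 1).det := hpd.det_pos.ne'.isUnit
  have hinv : (L + 1) * (L + 1)⁻¹ = 1 := Matrix.mul_nonsing_inv _ hunit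
  set e : Fin n → ℝ := fun i => if i ∈ A then (1:ℝ) else 0 with he
  set d : Fin n → ℝ := fun i => if i ∈ A then (0:ℝ) else 1 with hd
  have hde : Matrix.diagonal d = 1 - Matrix.diagonal e := by
    ext i j
    by_cases h : i = j
    · subst h
      by_cases hA : i ∈ A <;>
        simp [hd, he, hA, Matrix.one_apply_eq, Matrix.diagonal_apply_eq]
    · simp [Matrix.diagonal_apply_ne _ h, Matrix.one_apply_ne h]
  have hfact : L + Matrix.diagonal d = (L + 1) * (1 - (L + 1)⁻¹ * Matrix.diagonal e) := by
    rw [mul_sub, mul_one, ← mul_assoc, hinv, one_mul, hde]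
    exact (add_sub_assoc _ _ _).symm
  have hK : L * (L + 1)⁻¹ = 1 - (L + 1)⁻¹ := by
    have : (L + 1 - 1) * (L + 1)⁻¹ = (L + 1) * (L + 1)⁻¹ - 1 * (L + 1)⁻¹ := sub_mul _ _ _
    simpa [hinv] using this
  rw [sum_principal_minors L A, hfact, Matrix.det_mul, mul_comm]
  congr 1
  set B : Matrix (Fin n) (Fin n) ℝ := 1 - (L + 1)⁻¹ * Matrix.diagonal e with hB
  have hcols : ∀ j ∉ A, ∀ i, B i j = (1 : Matrix (Fin n) (Fin n) ℝ) i j := by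
    intro j hj i
    simp only [hB, Matrix.sub_apply, Matrix.mul_diagonal]
    have : e j = 0 := if_neg hj
    rw [this, mul_zero, sub_zero]
  rw [det_eq_det_principal_of_cols B A hcols]
  congr 1
  ext i j
  have hej : e (j : Fin n) = 1 := if_pos j.2
  simp [principalSubmatrix, hK, hB, Matrix.mul_diagonal, hej]
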